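/- Let X be a compact Hausdorff space and let G, R be disjoint compact subsets of a closed subspace L of X that is a compact connected linearly ordered topological space, with G contained in an open set O of X. Then there exists a finite collection J of pairwise disjoint (with disjoint closures) convex open subsets of L such that the union of J is contained in O, contains G ∩ L, misses R ∩ L, and each member of J meets G. -/

import Mathlib

open Set Topology

universe u

/-- A topological space is a LOTS if it is homeomorphic to a linear order with the order topology. -/
def IsLOTS (Y : Type u) [TopologicalSpace Y] : Prop :=
  ∃ (L : Type u) (lo : LinearOrder L) (ts : TopologicalSpace L),
    @OrderTopology L ts lo.toPartialOrder.toPreorder ∧ Nonempty (Y ≃ₜ L)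

/-- The set of locally ordered points of `X`. -/
def LO (X : Type u) [TopologicalSpace X] : Set X :=
  {x | ∃ U : Set X, IsOpen U ∧ x ∈ U ∧ IsLOTS ↥U}

/-- Orderly open sets. -/
def Orderly {X : Type u} [TopologicalSpace X] (U : Set X) : Prop :=
  IsOpen U ∧ U = interior (closure U) ∧ IsConnected U ∧
    (closure U \ U).Finite ∧ closure U \ U ⊆ LO X

/-- Topology of pointwise convergence on the homeomorphism group. -/
instance homPt (X : Type u) [TopologicalSpace X] : TopologicalSpace (X ≃ₜ X) :=
  TopologicalSpace.induced (fun f => (f : X → X)) Pi.topologicalSpace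

section Aux
variable {α : Type*} [LinearOrder α] [TopologicalSpace α] [OrderTopology α]

lemma myOrdConnected_closure {s : Set α} (hs : s.OrdConnected) :
    (closure s).OrdConnected := by
  constructor
  intro x hx y hy z hz
  rcases eq_or_lt_of_le hz.1 with rfl | hxz
  · exact hx
  rcases eq_or_lt_of_le hz.2 with rfl | hzy
  · exact hy
  obtain ⟨s1, hs1, hs1s⟩ := mem_closure_iff_nhds.mp hx (Iio z) (isOpen_Iio.mem_nhds hxz)
  obtain ⟨s2, hs2, hs2s⟩ := mem_closure_iff_nhds.mp hy (Ioi z) (isOpen_Ioi.mem_nhds hzy)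
  exact subset_closure (hs.out hs1s hs2s ⟨le_of_lt hs1, le_of_lt hs2⟩)

lemma exists_ordConnected_open_nhd {s : Set α} (hs : IsOpen s) :
    ∀ x ∈ s, ∃ V : Set α, IsOpen V ∧ V.OrdConnected ∧ x ∈ V ∧ V ⊆ s := by
  rw [isOpen_iff_generate_intervals] at hs
  induction hs with
  | basic t ht =>
    rcases ht with ⟨a, rfl | rfl⟩
    · exact fun x hx => ⟨Ioi a, isOpen_Ioi, ordConnected_Ioi, hx, subset_rfl⟩
    · exact fun x hx => ⟨Iio a, isOpen_Iio, ordConnected_Iio, hx, subset_rfl⟩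
  | univ => exact fun x _ => ⟨univ, isOpen_univ, ordConnected_univ, trivial, subset_rfl⟩
  | inter t u _ _ iht ihu =>
    intro x hx
    obtain ⟨V1, h1o, h1c, h1x, h1s⟩ := iht x hx.1
    obtain ⟨V2, h2o, h2c, h2x, h2s⟩ := ihu x hx.2
    exact ⟨V1 ∩ V2, h1o.inter h2o, h1c.inter h2c, ⟨h1x, h2x⟩, inter_subset_inter h1s h2s⟩
  | sUnion S hS ih =>
    intro x hx
    obtain ⟨t, htS, hxt⟩ := hx
    obtain ⟨V, hVo, hVc, hxV, hVt⟩ := ih t htS x hxt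
    exact ⟨V, hVo, hVc, hxV, hVt.trans (subset_sUnion_of_mem htS)⟩

lemma aux_sep (K U : Set α) (hK : IsCompact K) (hU : IsOpen U) (hKU : K ⊆ U) :
    ∃ J : Finset (Set α),
      (∀ A ∈ J, IsOpen A ∧ A.OrdConnected) ∧
      (∀ A ∈ J, ∀ B ∈ J, A ≠ B → closure A ∩ closure B = ∅) ∧
      (⋃ A ∈ J, A) ⊆ U ∧ K ⊆ (⋃ A ∈ J, A) ∧
      (∀ A ∈ J, (A ∩ K).Nonempty) := by
  classical
  -- Step 1: convex open neighborhoods with closures inside U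
  have hV : ∀ x ∈ K, ∃ V : Set α,
      IsOpen V ∧ V.OrdConnected ∧ x ∈ V ∧ closure V ⊆ U := by
    intro x hx
    obtain ⟨t, htn, htc, htU⟩ := exists_mem_nhds_isClosed_subset (hU.mem_nhds (hKU hx))
    obtain ⟨V, hVo, hVc, hxV, hVt⟩ := exists_ordConnected_open_nhd isOpen_interior x
      (mem_interior_iff_mem_nhds.mpr htn)
    exact ⟨V, hVo, hVc, hxV,
      (closure_minimal (hVt.trans interior_subset) htc).trans htU⟩
  choose! V hVo hVc hVx hVU using hV
  -- Step 2: finite subcover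
  obtain ⟨s, hsK, hcov⟩ := hK.elim_nhds_subcover V
    (fun x hx => (hVo x hx).mem_nhds (hVx x hx))
  -- Step 3: merging relation
  set step : α → α → Prop :=
    fun a b => a ∈ s ∧ b ∈ s ∧ (closure (V a) ∩ closure (V b)).Nonempty with hstepdef
  set r : α → α → Prop := Relation.ReflTransGen step with hrdef
  have hr_symm : Symmetric r :=
    fun x y h => (@Relation.ReflTransGen.stdSymm _ step
      ⟨fun a b h => ⟨h.2.1, h.1, h.2.2.imp (fun c hc => ⟨hc.2, hc.1⟩)⟩⟩).symm x y h
  have hrs : ∀ {p q : α}, p ∈ s → r p q → q ∈ s := by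
    intro p q hp h
    induction h with
    | refl => exact hp
    | tail _ h2 _ => exact h2.2.1
  set cls : α → Finset α := fun x => s.filter (fun y => r x y) with hclsdef
  have hclsmem : ∀ {x y}, y ∈ cls x ↔ (y ∈ s ∧ r x y) := by
    intro x y; simp [hclsdef, Finset.mem_filter]
  have hself : ∀ x ∈ s, x ∈ cls x :=
    fun x hx => hclsmem.mpr ⟨hx, Relation.ReflTransGen.refl⟩
  set W : α → Set α := fun x => ⋃ y ∈ cls x, V y with hWdef
  set H : α → Set α := fun x => {z | ∃ a ∈ W x, ∃ b ∈ W x, a ≤ z ∧ z ≤ b} with hHdef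
  have hWsub : ∀ x, W x ⊆ H x := fun x z hz => ⟨z, hz, z, hz, le_rfl, le_rfl⟩
  have hclsK : ∀ {x y}, y ∈ cls x → y ∈ K :=
    fun {x y} hy => hsK y (hclsmem.mp hy).1
  -- order splitting lemma
  have split : ∀ a b w z : α, min a b ≤ z → z ≤ max a b →
      (min a w ≤ z ∧ z ≤ max a w) ∨ (min w b ≤ z ∧ z ≤ max w b) := by
    intro a b w z h1 h2
    simp only [min_le_iff, le_max_iff] at *
    rcases le_total z w with h | h <;> tauto
  -- key chain lemma
  have key : ∀ (x : α), x ∈ s → ∀ (y : α), r x y →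
      ∀ a ∈ closure (V x), ∀ b ∈ closure (V y), ∀ z, min a b ≤ z → z ≤ max a b →
      ∃ c, r x c ∧ c ∈ s ∧ z ∈ closure (V c) := by
    intro x hxs y hxy
    induction hxy with
    | refl =>
      intro a ha b hb z h1 h2
      refine ⟨x, Relation.ReflTransGen.refl, hxs, ?_⟩
      have hoc := myOrdConnected_closure (hVc x (hsK x hxs))
      have hmin : min a b ∈ closure (V x) := by
        rcases le_total a b with h | h
        · rwa [min_eq_left h]
        · rwa [min_eq_right h]
      have hmax : max a b ∈ closure (V x) := by
        rcases le_total a b with h | h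
        · rwa [max_eq_right h]
        · rwa [max_eq_left h]
      exact hoc.out hmin hmax ⟨h1, h2⟩
    | tail hxb' hb'c ih =>
      rename_i b' c
      intro a ha b hb z h1 h2
      obtain ⟨w, hw1, hw2⟩ := hb'c.2.2
      rcases split a b w z h1 h2 with ⟨g1, g2⟩ | ⟨g1, g2⟩
      · exact ih a ha w hw1 z g1 g2
      · refine ⟨c, hxb'.tail hb'c, hb'c.2.1, ?_⟩
        have hoc := myOrdConnected_closure (hVc c (hsK c hb'c.2.1))
        have hmin : min w b ∈ closure (V c) := by
          rcases le_total w b with h | h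
          · rwa [min_eq_left h]
          · rwa [min_eq_right h]
        have hmax : max w b ∈ closure (V c) := by
          rcases le_total w b with h | h
          · rwa [max_eq_right h]
          · rwa [max_eq_left h]
        exact hoc.out hmin hmax ⟨g1, g2⟩
  -- H is contained in the union of closures over its class
  have hHsub : ∀ x ∈ s, H x ⊆ ⋃ y ∈ cls x, closure (V y) := by
    rintro x hxs z ⟨a, ha, b, hb, h1, h2⟩
    obtain ⟨y1, hy1, ha'⟩ := mem_iUnion₂.mp ha
    obtain ⟨y2, hy2, hb'⟩ := mem_iUnion₂.mp hb
    obtain ⟨hy1s, hrxy1⟩ := hclsmem.mp hy1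
    obtain ⟨hy2s, hrxy2⟩ := hclsmem.mp hy2
    obtain ⟨c, hrc, hcs, hzc⟩ := key y1 hy1s y2 ((hr_symm hrxy1).trans hrxy2)
      a (subset_closure ha') b (subset_closure hb') z
      (le_trans (min_le_left a b) h1) (le_trans h2 (le_max_right a b))
    exact mem_iUnion₂.mpr ⟨c, hclsmem.mpr ⟨hcs, hrxy1.trans hrc⟩, hzc⟩
  have hHopen : ∀ x, IsOpen (H x) := by
    intro x
    have hWopen : IsOpen (W x) :=
      isOpen_biUnion (fun y hy => hVo y (hclsK hy))
    rw [isOpen_iff_forall_mem_open]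
    rintro z ⟨a, ha, b, hb, haz, hzb⟩
    by_cases hzW : z ∈ W x
    · exact ⟨W x, hWsub x, hWopen, hzW⟩
    · refine ⟨Ioo a b, ?_, isOpen_Ioo, ?_, ?_⟩
      · rintro u ⟨u1, u2⟩; exact ⟨a, ha, b, hb, u1.le, u2.le⟩
      · exact lt_of_le_of_ne haz (by rintro rfl; exact hzW ha)
      · exact lt_of_le_of_ne hzb (by rintro rfl; exact hzW hb)
  have hHoc : ∀ x, (H x).OrdConnected := by
    intro x; constructor
    rintro z1 ⟨a, ha, b, hb, h1, h2⟩ z2 ⟨a', ha', b', hb', h1', h2'⟩ z hz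
    exact ⟨a, ha, b', hb', h1.trans hz.1, hz.2.trans h2'⟩
  have hcls_eq : ∀ x y, r x y → cls x = cls y := by
    intro x y hxy
    ext c
    simp only [hclsdef, Finset.mem_filter, and_congr_right_iff]
    exact fun _ => ⟨fun h => (hr_symm hxy).trans h, fun h => hxy.trans h⟩
  have hclH : ∀ x ∈ s, closure (H x) ⊆ ⋃ y ∈ cls x, closure (V y) := by
    intro x hx
    refine closure_minimal (hHsub x hx) ?_
    exact (cls x).finite_toSet.isClosed_biUnion (fun y _ => isClosed_closure)
  have hdisj : ∀ x y : α, ¬ r x y →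
      (⋃ c ∈ cls x, closure (V c)) ∩ (⋃ c ∈ cls y, closure (V c)) = ∅ := by
    intro x y hnr
    ext z
    simp only [mem_inter_iff, mem_iUnion, mem_empty_iff_false, iff_false, not_and]
    rintro ⟨c1, hc1, hz1⟩ ⟨c2, hc2, hz2⟩
    obtain ⟨hc1s, hrxc1⟩ := hclsmem.mp hc1
    obtain ⟨hc2s, hryc2⟩ := hclsmem.mp hc2
    exact hnr (hrxc1.trans ((Relation.ReflTransGen.single
      ⟨hc1s, hc2s, ⟨z, hz1, hz2⟩⟩).trans (hr_symm hryc2)))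
  -- Assemble
  refine ⟨s.image H, ?_, ?_, ?_, ?_, ?_⟩
  · rintro A hA
    obtain ⟨x, _, rfl⟩ := Finset.mem_image.mp hA
    exact ⟨hHopen x, hHoc x⟩
  · rintro A hA B hB hAB
    obtain ⟨x, hx, rfl⟩ := Finset.mem_image.mp hA
    obtain ⟨y, hy, rfl⟩ := Finset.mem_image.mp hB
    have hnr : ¬ r x y := by
      intro h
      apply hAB
      have hWeq : W x = W y := by rw [hWdef]; simp only [hcls_eq x y h]
      rw [hHdef]; simp only [hWeq]
    apply subset_empty_iff.mp
    calc closure (H x) ∩ closure (H y)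
        ⊆ (⋃ c ∈ cls x, closure (V c)) ∩ (⋃ c ∈ cls y, closure (V c)) :=
          inter_subset_inter (hclH x hx) (hclH y hy)
      _ = ∅ := hdisj x y hnr
  · rintro z hz
    obtain ⟨A, hA, hzA⟩ := mem_iUnion₂.mp hz
    obtain ⟨x, hx, rfl⟩ := Finset.mem_image.mp hA
    obtain ⟨c, hc, hzc⟩ := mem_iUnion₂.mp (hHsub x hx hzA)
    exact hVU c (hclsK hc) hzc
  · intro z hz
    obtain ⟨x, hx, hzx⟩ := mem_iUnion₂.mp (hcov hz)
    refine mem_iUnion₂.mpr ⟨H x, Finset.mem_image_of_mem H hx, ?_⟩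
    exact hWsub x (mem_iUnion₂.mpr ⟨x, hself x hx, hzx⟩)
  · rintro A hA
    obtain ⟨x, hx, rfl⟩ := Finset.mem_image.mp hA
    exact ⟨x, hWsub x (mem_iUnion₂.mpr ⟨x, hself x hx, hVx x (hsK x hx)⟩), hsK x hx⟩

end Aux


/-- Claim 2: separation of green and red points in a compact LOTS by finitely many
convex open sets. -/
theorem stmt_17 {X : Type u} [TopologicalSpace X] [CompactSpace X] [T2Space X]
    (Lset : Set X) (hLclosed : IsClosed Lset)
    (lo : LinearOrder ↥Lset)
    (hot : @OrderTopology ↥Lset instTopologicalSpaceSubtype lo.toPartialOrder.toPreorder)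
    (hLcomp : IsCompact Lset) (hLconn : IsConnected Lset)
    (G R : Set X) (hGcomp : IsCompact G) (hRcomp : IsCompact R)
    (hGR : G ∩ R = ∅)
    (O : Set X) (hOopen : IsOpen O) (hGO : G ⊆ O) :
    ∃ J : Finset (Set ↥Lset),
      (∀ A ∈ J, @IsOpen ↥Lset instTopologicalSpaceSubtype A ∧
        @Set.OrdConnected ↥Lset lo.toPartialOrder.toPreorder A) ∧
      (∀ A ∈ J, ∀ B ∈ J, A ≠ B → closure A ∩ closure B = ∅) ∧
      (⋃ A ∈ J, (Subtype.val '' A)) ⊆ O ∧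
      (Subtype.val ⁻¹' G : Set ↥Lset) ⊆ ⋃ A ∈ J, A ∧
      ((⋃ A ∈ J, (Subtype.val '' A)) ∩ R = ∅) ∧
      (∀ A ∈ J, ((Subtype.val '' A) ∩ G).Nonempty) := by
  classical
  letI := lo
  haveI := hot
  haveI : CompactSpace ↥Lset := isCompact_iff_compactSpace.mp hLcomp
  have hKc : IsCompact (Subtype.val ⁻¹' G : Set ↥Lset) :=
    (hGcomp.isClosed.preimage continuous_subtype_val).isCompact
  have hUo : IsOpen (Subtype.val ⁻¹' (O \ R) : Set ↥Lset) :=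
    (hOopen.sdiff hRcomp.isClosed).preimage continuous_subtype_val
  have hKU : (Subtype.val ⁻¹' G : Set ↥Lset) ⊆ Subtype.val ⁻¹' (O \ R) := by
    intro x hx
    exact ⟨hGO hx, fun hr => (eq_empty_iff_forall_notMem.mp hGR) ↑x ⟨hx, hr⟩⟩
  obtain ⟨J, h1, h2, h3, h4, h5⟩ := aux_sep _ _ hKc hUo hKU
  refine ⟨J, h1, h2, ?_, h4, ?_, ?_⟩
  · rintro z hz
    obtain ⟨A, hA, a, haA, rfl⟩ := mem_iUnion₂.mp hz
    exact (h3 (mem_iUnion₂.mpr ⟨A, hA, haA⟩)).1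
  · apply eq_empty_iff_forall_notMem.mpr
    rintro z ⟨hz, hzR⟩
    obtain ⟨A, hA, a, haA, rfl⟩ := mem_iUnion₂.mp hz
    exact (h3 (mem_iUnion₂.mpr ⟨A, hA, haA⟩)).2 hzR
  · intro A hA
    obtain ⟨a, haA, haG⟩ := h5 A hA
    exact ⟨↑a, ⟨a, haA, rfl⟩, haG⟩
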